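/- Let A: ℤ → ℂ be antisymmetric (A(m) = -A(-m)) and satisfy (n-m)A(k) + (m-k)A(n) + (k-n)A(m) = 0 whenever k+n+m = 0. Then A is completely determined by A(1) and A(2); i.e., the space of such functions A is at most 2-dimensional. -/

import Mathlib

lemma witt_aux (D : ℤ → ℂ)
    (hanti : ∀ m : ℤ, D m = -D (-m))
    (hcoc : ∀ k n m : ℤ, k + n + m = 0 →
      ((n : ℂ) - (m : ℂ)) * D k + ((m : ℂ) - (k : ℂ)) * D n + ((k : ℂ) - (n : ℂ)) * D m = 0)
    (h1 : D 1 = 0) (h2 : D 2 = 0) : ∀ n : ℤ, D n = 0 := by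
  have h0 : D 0 = 0 := by have := hanti 0; simp only [neg_zero] at this; linear_combination this/2
  have hnat : ∀ n : ℕ, D n = 0 := by
    intro n
    induction n using Nat.strong_induction_on with
    | _ n ih =>
      match n with
      | 0 => exact h0
      | 1 => exact_mod_cast h1
      | 2 => exact_mod_cast h2
      | (m+3) =>
        have hm2 : D ((m:ℤ)+2) = 0 := by
          have := ih (m+2) (by omega)
          push_cast at this
          exact this
        have hc := hcoc 1 ((m:ℤ)+2) (-((m:ℤ)+3)) (by ring)
        have ha := hanti ((m:ℤ)+3)
        have key : ((m:ℂ)+1) * D ((m:ℤ)+3) = 0 := by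
          push_cast at hc ⊢
          linear_combination hc + ((m:ℂ)+1)*ha - (2*(m:ℂ)+5)*h1 + ((m:ℂ)+4)*hm2
        have hne : ((m:ℂ)+1) ≠ 0 := by
          exact_mod_cast Nat.succ_ne_zero m
        have := mul_eq_zero.mp key
        rcases this with h | h
        · exact absurd h hne
        · push_cast
          exact h
  intro n
  rcases le_or_gt n 0 with h | h
  · obtain ⟨m, hm⟩ : ∃ m : ℕ, n = -(m:ℤ) := ⟨n.natAbs, by omega⟩
    rw [hm, hanti]; simp [hnat m]
  · obtain ⟨m, hm⟩ : ∃ m : ℕ, n = (m:ℤ) := ⟨n.natAbs, by omega⟩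
    rw [hm]; exact hnat m

/-- An antisymmetric solution `A` of the Witt-cocycle functional equation is
completely determined by `A 1` and `A 2`: two such solutions agreeing at `1` and `2`
are equal (so the space of such functions is at most 2-dimensional). -/
theorem stmt_1 (A B : ℤ → ℂ)
    (hAanti : ∀ m : ℤ, A m = -A (-m))
    (hBanti : ∀ m : ℤ, B m = -B (-m))
    (hAcoc : ∀ k n m : ℤ, k + n + m = 0 →
      ((n : ℂ) - (m : ℂ)) * A k + ((m : ℂ) - (k : ℂ)) * A n + ((k : ℂ) - (n : ℂ)) * A m = 0)
    (hBcoc : ∀ k n m : ℤ, k + n + m = 0 →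
      ((n : ℂ) - (m : ℂ)) * B k + ((m : ℂ) - (k : ℂ)) * B n + ((k : ℂ) - (n : ℂ)) * B m = 0)
    (h1 : A 1 = B 1) (h2 : A 2 = B 2) :
    A = B := by
  have key := witt_aux (fun n => A n - B n)
    (fun m => by simp [hAanti m, hBanti m]; ring)
    (fun k n m h => by
      have := hAcoc k n m h
      have := hBcoc k n m h
      linear_combination hAcoc k n m h - hBcoc k n m h)
    (by simp [h1]) (by simp [h2])
  funext n
  have := key n
  exact sub_eq_zero.mp this
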